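/- Let K be a field equipped with a non-Archimedean absolute value ‖·‖, and let f(z) = z^d + a_{d−2}z^{d−2} + ⋯ + a_0 ∈ K[z] be monic centered of degree d ≥ 2 with ‖(d : K)‖ = 1. Let R ≥ 1 be a real number with ‖a_i‖ ≤ R^{d−i} for all 0 ≤ i ≤ d−2 (so R ≥ R_f). Suppose φ, ψ : {z ∈ K : ‖z‖ > R} → K both satisfy, for all z with ‖z‖ > R: φ(f(z)) = φ(z)^d and ‖φ(z) − z‖ < ‖z‖ (and likewise for ψ), and both satisfy the normalization ‖φ(z) − z‖/‖z‖ → 0 and ‖ψ(z) − z‖/‖z‖ → 0 as ‖z‖ → ∞. Then φ(z) = ψ(z) for all z with ‖z‖ > R. (Uniqueness of the normalized Böttcher coordinate, on classical points.) -/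

import Mathlib

open Polynomial Filter

/-- The monic centered polynomial `z^d + a_{d-2} z^{d-2} + ⋯ + a_0`. -/
noncomputable def MCpoly {K : Type*} [Field K] (d : ℕ) (a : Fin (d - 1) → K) : Polynomial K :=
  X ^ d + ∑ i : Fin (d - 1), C (a i) * X ^ (i : ℕ)

/-- `phi` is a normalized Böttcher coordinate of `f` (of degree `d`) on `{‖z‖ > R}`:
it semiconjugates `f` to `z ↦ z^d`, is `‖·‖`-close to the identity there, and is
asymptotic to the identity at infinity. -/
def IsBoettcher {K : Type*} [NormedField K] (f : K → K) (d : ℕ) (R : ℝ) (phi : K → K) :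
    Prop :=
  (∀ z : K, R < ‖z‖ → phi (f z) = (phi z) ^ d) ∧
  (∀ z : K, R < ‖z‖ → ‖phi z - z‖ < ‖z‖) ∧
  Tendsto (fun z : K => ‖phi z - z‖ / ‖z‖) (comap (fun z : K => ‖z‖) atTop) (nhds 0)

section Aux

variable {K : Type*} [NormedField K] [IsUltrametricDist K]

lemma aux_norm_add_eq_left {x y : K} (h : ‖y‖ < ‖x‖) : ‖x + y‖ = ‖x‖ := by
  rw [IsUltrametricDist.norm_add_eq_max_of_norm_ne_norm
    (x := x) (y := y) (by intro he; rw [he] at h; exact lt_irrefl _ h), max_eq_left h.le]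

lemma aux_pow_sub_one {u : K} (hu : ‖u‖ ≤ 1) (k : ℕ) : ‖u ^ k - 1‖ ≤ ‖u - 1‖ := by
  induction k with
  | zero => simp
  | succ k ih =>
    have h : u ^ (k + 1) - 1 = u ^ k * (u - 1) + (u ^ k - 1) := by ring
    rw [h]
    refine le_trans (IsUltrametricDist.norm_add_le_max _ _) (max_le ?_ ih)
    rw [norm_mul, norm_pow]
    calc ‖u‖ ^ k * ‖u - 1‖ ≤ 1 * ‖u - 1‖ := by
          gcongr
          exact pow_le_one₀ (norm_nonneg _) hu
      _ = ‖u - 1‖ := one_mul _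

lemma aux_key {d : ℕ} (hd : 1 ≤ d) (hdnorm : ‖(d : K)‖ = 1)
    {x y : K} {S : ℝ} (hS : 0 < S) (hx : ‖x‖ = S) (hy : ‖y‖ = S) (hxy : ‖x - y‖ < S) :
    ‖x ^ d - y ^ d‖ = ‖x - y‖ * S ^ (d - 1) := by
  have hy0 : y ≠ 0 := by
    intro h; rw [h, norm_zero] at hy; exact hS.ne hy
  set u : K := x / y with hu_def
  have hu : ‖u‖ = 1 := by rw [hu_def, norm_div, hx, hy, div_self hS.ne']
  have humeq : ‖u - 1‖ = ‖x - y‖ / S := by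
    have h : u - 1 = (x - y) / y := by rw [hu_def]; field_simp
    rw [h, norm_div, hy]
  have hum1 : ‖u - 1‖ < 1 := by rw [humeq]; exact (div_lt_one hS).mpr hxy
  have hsum : ‖∑ k ∈ Finset.range d, u ^ k‖ = 1 := by
    have hdiff : ‖(∑ k ∈ Finset.range d, u ^ k) - (d : K)‖ ≤ ‖u - 1‖ := by
      have h : (∑ k ∈ Finset.range d, u ^ k) - (d : K)
          = ∑ k ∈ Finset.range d, (u ^ k - 1) := by
        rw [Finset.sum_sub_distrib]; simp
      rw [h]
      exact IsUltrametricDist.norm_sum_le_of_forall_le_of_nonneg (norm_nonneg _)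
        (fun k _ => aux_pow_sub_one hu.le k)
    have h2 : (∑ k ∈ Finset.range d, u ^ k)
        = (d : K) + ((∑ k ∈ Finset.range d, u ^ k) - (d : K)) := by ring
    rw [h2, aux_norm_add_eq_left (by rw [hdnorm]; exact lt_of_le_of_lt hdiff hum1), hdnorm]
  have hgeom : x ^ d - y ^ d = y ^ d * (u ^ d - 1) := by
    rw [hu_def, div_pow]
    field_simp
  rw [hgeom, norm_mul, norm_pow, hy, ← geom_sum_mul, norm_mul, hsum, one_mul, humeq]
  have hpow : S ^ d = S ^ (d - 1) * S := by
    rw [← pow_succ]; congr 1; omega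
  rw [hpow]
  field_simp

end Aux

/-- uniqueness (on classical points) of the normalized Böttcher
coordinate of a monic centered tame polynomial on `{‖z‖ > R}` for `R ≥ R_f`. -/
theorem boettcher_unique
    {K : Type*} [NormedField K] [IsUltrametricDist K]
    (d : ℕ) (hd : 2 ≤ d) (hdnorm : ‖(d : K)‖ = 1)
    (a : Fin (d - 1) → K) (R : ℝ) (hR : 1 ≤ R)
    (hcoeff : ∀ i : Fin (d - 1), ‖a i‖ ≤ R ^ (d - (i : ℕ)))
    (φ ψ : K → K)
    (hφ : IsBoettcher (fun z => (MCpoly d a).eval z) d R φ)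
    (hψ : IsBoettcher (fun z => (MCpoly d a).eval z) d R ψ) :
    ∀ z : K, R < ‖z‖ → φ z = ψ z := by
  obtain ⟨hφ1, hφ2, hφ3⟩ := hφ
  obtain ⟨hψ1, hψ2, hψ3⟩ := hψ
  set F : K → K := fun z => (MCpoly d a).eval z with hF
  have hRpos : (0 : ℝ) < R := lt_of_lt_of_le one_pos hR
  -- norm of F on the outside region
  have hFz : ∀ w : K, R < ‖w‖ → ‖F w‖ = ‖w‖ ^ d := by
    intro w hw
    have hw0 : (0 : ℝ) < ‖w‖ := lt_trans hRpos hw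
    have hw1 : (1 : ℝ) ≤ ‖w‖ := le_of_lt (lt_of_le_of_lt hR hw)
    have heval : F w = w ^ d + ∑ i : Fin (d - 1), a i * w ^ (i : ℕ) := by
      simp [hF, MCpoly, eval_finset_sum]
    rw [heval, aux_norm_add_eq_left, norm_pow]
    rw [norm_pow]
    refine lt_of_le_of_lt (IsUltrametricDist.norm_sum_le_of_forall_le_of_nonneg
      (C := R * ‖w‖ ^ (d - 1)) (by positivity) ?_) ?_
    · intro i _
      have hi : (i : ℕ) < d - 1 := i.isLt
      rw [norm_mul, norm_pow]
      calc ‖a i‖ * ‖w‖ ^ (i : ℕ) ≤ R ^ (d - (i : ℕ)) * ‖w‖ ^ (i : ℕ) := by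
            gcongr
            exact hcoeff i
        _ = R * R ^ (d - (i : ℕ) - 1) * ‖w‖ ^ (i : ℕ) := by
            rw [mul_comm R, ← pow_succ]; congr 2; omega
        _ ≤ R * ‖w‖ ^ (d - (i : ℕ) - 1) * ‖w‖ ^ (i : ℕ) := by
            gcongr
        _ = R * ‖w‖ ^ (d - 1) := by
            rw [mul_assoc, ← pow_add]; congr 2; omega
    · calc R * ‖w‖ ^ (d - 1) < ‖w‖ * ‖w‖ ^ (d - 1) := by gcongr
        _ = ‖w‖ ^ d := by rw [← pow_succ']; congr 1; omega
  intro z hz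
  have hz0 : (0 : ℝ) < ‖z‖ := lt_trans hRpos hz
  have hz1 : (1 : ℝ) < ‖z‖ := lt_of_le_of_lt hR hz
  -- norms of iterates
  have hiter : ∀ n : ℕ, ‖F^[n] z‖ = ‖z‖ ^ (d ^ n) := by
    intro n
    induction n with
    | zero => simp
    | succ n ih =>
      have hRn : R < ‖F^[n] z‖ := by
        rw [ih]
        exact lt_of_lt_of_le hz (le_self_pow₀ hz1.le (pow_ne_zero n (by omega)))
      rw [Function.iterate_succ_apply', hFz _ hRn, ih, ← pow_mul, ← pow_succ]
  have hgtR : ∀ n : ℕ, R < ‖F^[n] z‖ := by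
    intro n
    rw [hiter n]
    exact lt_of_lt_of_le hz (le_self_pow₀ hz1.le (pow_ne_zero n (by omega)))
  -- norms of φ, ψ on the region
  have hnormφ : ∀ w : K, R < ‖w‖ → ‖φ w‖ = ‖w‖ := by
    intro w hw
    have h : φ w = w + (φ w - w) := by ring
    rw [h, aux_norm_add_eq_left (hφ2 w hw)]
  have hnormψ : ∀ w : K, R < ‖w‖ → ‖ψ w‖ = ‖w‖ := by
    intro w hw
    have h : ψ w = w + (ψ w - w) := by ring
    rw [h, aux_norm_add_eq_left (hψ2 w hw)]
  have hsubsmall : ∀ w : K, R < ‖w‖ → ‖φ w - ψ w‖ < ‖w‖ := by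
    intro w hw
    have h : φ w - ψ w = (φ w - w) + (w - ψ w) := by ring
    rw [h]
    refine lt_of_le_of_lt (IsUltrametricDist.norm_add_le_max _ _) (max_lt (hφ2 w hw) ?_)
    rw [norm_sub_rev]; exact hψ2 w hw
  -- constant ratio along orbit
  have hconst : ∀ n : ℕ,
      ‖φ (F^[n] z) - ψ (F^[n] z)‖ / ‖F^[n] z‖ = ‖φ z - ψ z‖ / ‖z‖ := by
    intro n
    induction n with
    | zero => simp
    | succ n ih =>
      set w := F^[n] z with hw_def
      have hw : R < ‖w‖ := hgtR n
      have hw0 : ‖w‖ ≠ 0 := (lt_trans hRpos hw).ne'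
      rw [Function.iterate_succ_apply', ← hw_def, hφ1 w hw, hψ1 w hw]
      have hkey : ‖φ w ^ d - ψ w ^ d‖ = ‖φ w - ψ w‖ * ‖w‖ ^ (d - 1) :=
        aux_key (by omega) hdnorm (lt_trans hRpos hw) (hnormφ w hw) (hnormψ w hw)
          (hsubsmall w hw)
      rw [hkey, hFz w hw, ← ih]
      have hpow : ‖w‖ ^ d = ‖w‖ ^ (d - 1) * ‖w‖ := by
        rw [← pow_succ]; congr 1; omega
      rw [mul_comm, hpow, mul_div_mul_left _ _ (pow_ne_zero _ hw0)]
  -- the orbit tends to infinity in norm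
  have hcomp : Tendsto (fun n : ℕ => F^[n] z) atTop (comap (fun z : K => ‖z‖) atTop) := by
    rw [tendsto_comap_iff]
    have h : ((fun z : K => ‖z‖) ∘ fun n : ℕ => F^[n] z) = fun n : ℕ => ‖z‖ ^ (d ^ n) :=
      funext hiter
    rw [h]
    exact (tendsto_pow_atTop_atTop_of_one_lt hz1).comp
      (tendsto_pow_atTop_atTop_of_one_lt (by omega))
  have ha := hφ3.comp hcomp
  have hb := hψ3.comp hcomp
  -- squeeze
  have hsq : Tendsto (fun n : ℕ => ‖φ (F^[n] z) - ψ (F^[n] z)‖ / ‖F^[n] z‖) atTop (nhds 0) := by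
    have hmax : Tendsto (fun n : ℕ =>
        max (‖φ (F^[n] z) - F^[n] z‖ / ‖F^[n] z‖) (‖ψ (F^[n] z) - F^[n] z‖ / ‖F^[n] z‖))
        atTop (nhds 0) := by
      have := ha.max hb
      simpa [Function.comp] using this
    refine squeeze_zero (fun n => by positivity) (fun n => ?_) hmax
    have hw : R < ‖F^[n] z‖ := hgtR n
    set w := F^[n] z
    have hw0 : (0 : ℝ) ≤ ‖w‖ := norm_nonneg _
    have h : φ w - ψ w = (φ w - w) + (w - ψ w) := by ring
    calc ‖φ w - ψ w‖ / ‖w‖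
        ≤ max ‖φ w - w‖ ‖ψ w - w‖ / ‖w‖ := by
          gcongr
          rw [h]
          refine le_trans (IsUltrametricDist.norm_add_le_max _ _) ?_
          rw [norm_sub_rev w]
      _ = max (‖φ w - w‖ / ‖w‖) (‖ψ w - w‖ / ‖w‖) := by
          rw [max_div_div_right hw0]
  -- conclude
  have hconst' : (fun n : ℕ => ‖φ (F^[n] z) - ψ (F^[n] z)‖ / ‖F^[n] z‖)
      = fun _ : ℕ => ‖φ z - ψ z‖ / ‖z‖ := funext hconst
  rw [hconst'] at hsq
  have h0 : ‖φ z - ψ z‖ / ‖z‖ = 0 := tendsto_nhds_unique tendsto_const_nhds hsq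
  field_simp at h0
  rw [mul_zero, norm_eq_zero] at h0
  exact sub_eq_zero.mp h0
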